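/- Let 7/3 < p < 5 and define g(λ) = 4λ^{3(p−1)/2} − 3(p−1)λ² + 3p − 7 for λ > 0. Then g(1) = g'(1) = 0, g is strictly decreasing on [0,1), and for every δ ∈ (0,1) there exists a constant c > 0 such that g(λ) ≥ c(1−λ)² for all λ ∈ [δ, 1]. -/

import Mathlib

open Real

noncomputable section

/-- The coefficient function `g(λ) = 4λ^{3(p−1)/2} − 3(p−1)λ² + 3p − 7` appearing in
the fibering-map computation. -/
def g (p lam : ℝ) : ℝ := 4 * lam ^ (3*(p - 1)/2) - 3*(p - 1) * lam ^ 2 + (3*p - 7)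

/-- For `7/3 < p < 5`: `g(1) = g'(1) = 0`, `g` is strictly decreasing on `[0,1)`, and
for every `δ ∈ (0,1)` there is `c > 0` with `g(λ) ≥ c(1−λ)²` on `[δ,1]`. -/
theorem g_properties (p : ℝ) (hp : 7/3 < p) (hp' : p < 5) :
    g p 1 = 0 ∧
    deriv (g p) 1 = 0 ∧
    StrictAntiOn (g p) (Set.Ico (0:ℝ) 1) ∧
    ∀ δ ∈ Set.Ioo (0:ℝ) 1, ∃ c > (0:ℝ), ∀ lam ∈ Set.Icc δ 1,
      c * (1 - lam) ^ 2 ≤ g p lam := by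
  set e : ℝ := 3*(p-1)/2 with he
  have he2 : 2 < e := by rw [he]; linarith
  have he6 : e < 6 := by rw [he]; linarith
  -- derivative of g
  have hderiv : ∀ x : ℝ, x ≠ 0 → HasDerivAt (g p) (4*e*(x^(e-1) - x)) x := by
    intro x hx
    have h1 : HasDerivAt (fun y : ℝ => y ^ e) (e * x^(e-1)) x :=
      Real.hasDerivAt_rpow_const (Or.inl hx)
    have h2 : HasDerivAt (fun y : ℝ => 4 * y ^ e - 3*(p-1)*y^2 + (3*p-7))
        (4 * (e * x^(e-1)) - 3*(p-1)*(2*x^1)) x := by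
      exact ((h1.const_mul 4).sub ((hasDerivAt_pow 2 x).const_mul (3*(p-1)))).add_const _
    have heq : (fun y : ℝ => 4 * y ^ e - 3*(p-1)*y^2 + (3*p-7)) = g p := by
      funext y; rw [g, he]
    rw [heq] at h2
    convert h2 using 1
    rw [he]; ring
  have hg1 : g p 1 = 0 := by
    simp [g, Real.one_rpow]; ring
  have hcont : Continuous (g p) := by
    rw [continuous_iff_continuousAt]
    intro x
    have h1 : ContinuousAt (fun y : ℝ => y ^ e) x :=
      Real.continuousAt_rpow_const x e (Or.inr (by linarith))
    exact ((h1.const_mul 4).sub (((continuous_pow 2).continuousAt).const_mul (3*(p-1)))).add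
      continuousAt_const
  have hderivneg : ∀ x ∈ Set.Ioo (0:ℝ) 1, deriv (g p) x < 0 := by
    intro x hx
    rw [(hderiv x (ne_of_gt hx.1)).deriv]
    have hlt : x ^ (e-1) < x := by
      have := Real.rpow_lt_rpow_of_exponent_gt hx.1 hx.2 (by linarith : (1:ℝ) < e-1)
      rwa [Real.rpow_one] at this
    exact mul_neg_of_pos_of_neg (by linarith) (by linarith)
  refine ⟨hg1, ?_, ?_, ?_⟩
  · rw [(hderiv 1 one_ne_zero).deriv, Real.one_rpow, sub_self, mul_zero]
  · refine strictAntiOn_of_deriv_neg (convex_Ico 0 1) hcont.continuousOn ?_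
    rwa [interior_Ico]
  · intro δ hδ
    set K : ℝ := 4*e*δ*min 1 (e-2) with hK
    have hKpos : 0 < K := by
      apply mul_pos (mul_pos (by linarith) hδ.1)
      exact lt_min one_pos (by linarith)
    refine ⟨K/2, by linarith, ?_⟩
    intro lam hlam
    set F : ℝ → ℝ := fun x => g p x - K/2 * (1-x)^2 with hF
    -- F' ≤ 0 on interior
    have hFderiv : ∀ x : ℝ, x ≠ 0 → HasDerivAt F (4*e*(x^(e-1) - x) + K*(1-x)) x := by
      intro x hx
      have h2 : HasDerivAt (fun y : ℝ => K/2 * (1-y)^2) (K/2 * (2*(1-x)*(-1))) x := by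
        have : HasDerivAt (fun y : ℝ => (1-y)^2) (2*(1-x)^1*(0-1)) x :=
          ((hasDerivAt_const x 1).sub (hasDerivAt_id x)).pow 2
        simpa using this.const_mul (K/2)
      exact ((hderiv x hx).sub h2).congr_deriv (by ring)
    have hFanti : AntitoneOn F (Set.Icc δ 1) := by
      apply antitoneOn_of_deriv_nonpos (convex_Icc δ 1)
      · exact (hcont.sub (continuous_const.mul ((continuous_const.sub continuous_id).pow 2))).continuousOn
      · intro x hx
        rw [interior_Icc] at hx
        have hx0 : 0 < x := lt_trans hδ.1 hx.1
        exact (hFderiv x (ne_of_gt hx0)).differentiableAt.differentiableWithinAt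
      · intro x hx
        rw [interior_Icc] at hx
        have hx0 : 0 < x := lt_trans hδ.1 hx.1
        rw [(hFderiv x (ne_of_gt hx0)).deriv]
        -- key inequality: 4e(x - x^{e-1}) ≥ K(1-x)
        have hxe : x ^ (e-1) = x * x^(e-2) := by
          rw [show e-1 = 1 + (e-2) by ring, Real.rpow_add hx0, Real.rpow_one]
        have hbern : min 1 (e-2) * (1-x) ≤ 1 - x^(e-2) := by
          rcases le_total (e-2) 1 with h | h
          · rw [min_eq_right h]
            have hb := rpow_one_add_le_one_add_mul_self (s := x-1) (by linarith)
              (p := e-2) (by linarith) h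
            rw [show (1:ℝ)+(x-1) = x by ring] at hb
            nlinarith [hb]
          · rw [min_eq_left h]
            have hb := Real.rpow_le_rpow_of_exponent_ge hx0 hx.2.le h
            rw [Real.rpow_one] at hb
            linarith
        have hmn : 0 ≤ min 1 (e-2) * (1-x) :=
          mul_nonneg (le_min zero_le_one (by linarith)) (by linarith [hx.2])
        have key : δ * (min 1 (e-2) * (1-x)) ≤ x * (1 - x^(e-2)) :=
          mul_le_mul hx.1.le hbern hmn hx0.le
        have key2 : 4*e*(δ * (min 1 (e-2) * (1-x))) ≤ 4*e*(x * (1 - x^(e-2))) :=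
          mul_le_mul_of_nonneg_left key (by linarith)
        rw [hxe, hK]
        nlinarith [key2]
    have h1mem : (1:ℝ) ∈ Set.Icc δ 1 := ⟨le_of_lt hδ.2, le_refl 1⟩
    have := hFanti hlam h1mem hlam.2
    have hF1 : F 1 = 0 := by simp [hF, hg1]
    rw [hF1] at this
    simpa [hF, sub_nonneg] using this
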